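/- Let n ≥ 5 and m = ⌈(n-3)/2⌉ + 1. Let α = (1, ω(2),...,ω(n-2), n-1, n) and β = (1, γ(2),...,γ(m), n, γ(m+1),...,γ(n-2), n-1) be cyclic orderings, where ω, γ are permutations of {2,...,n-2}. If {ω(2),...,ω(m)} ∩ {γ(m+1),...,γ(n-2)} ≠ ∅, then no unrooted binary tree with n leaves is planar with respect to both α and β. -/

import Mathlib

/-- `A` is a contiguous arc of the cyclic ordering given by the list `l`. -/
def IsArc (l : List ℕ) (A : Finset ℕ) : Prop :=
  ∃ k m : ℕ, A = ((l.rotate k).take m).toFinset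

/-- `A` is a contiguous interval of the (linear) list `t`. -/
def Iv (t : List ℕ) (A : Finset ℕ) : Prop :=
  ∃ i j : ℕ, A = ((t.drop i).take j).toFinset

lemma isArc_rotate (l : List ℕ) (A : Finset ℕ) (r : ℕ) (h : IsArc l A) :
    IsArc (l.rotate r) A := by
  rcases Nat.eq_zero_or_pos l.length with hl | hl
  · have : l = [] := List.length_eq_zero_iff.mp hl
    subst this
    simpa [List.rotate_nil] using h
  · rw [← List.rotate_mod]
    have hrlt : r % l.length < l.length := Nat.mod_lt _ hl
    obtain ⟨k, mm, hA⟩ := h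
    refine ⟨l.length - r % l.length + k, mm, ?_⟩
    rw [List.rotate_rotate]
    have he : r % l.length + (l.length - r % l.length + k) = l.length + k := by omega
    rw [he, ← List.rotate_rotate, List.rotate_length]
    exact hA

lemma isArc_cons_iv {a : ℕ} {t : List ℕ} {A : Finset ℕ}
    (h : IsArc (a :: t) A) (ha : a ∉ A) : Iv t A := by
  obtain ⟨k, mm, hA⟩ := h
  have hlpos : 0 < (a :: t).length := by simp
  rw [← List.rotate_mod] at hA
  obtain ⟨k', hk'⟩ : ∃ k', k % (a :: t).length = k' := ⟨_, rfl⟩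
  rw [hk'] at hA
  have hklt : k' < (a :: t).length := hk' ▸ Nat.mod_lt _ hlpos
  rw [List.rotate_eq_drop_append_take hklt.le, List.take_append] at hA
  have hld : ((a :: t).drop k').length = (a :: t).length - k' := List.length_drop
  by_cases hz : mm ≤ (a :: t).length - k'
  · have h0 : mm - ((a :: t).drop k').length = 0 := by omega
    rw [h0, List.take_zero, List.append_nil] at hA
    rcases Nat.eq_zero_or_pos k' with hk0 | hkpos
    · rw [hk0, List.drop_zero] at hA
      rcases Nat.eq_zero_or_pos mm with hm0 | hmpos
      · rw [hm0, List.take_zero] at hA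
        exact ⟨0, 0, by simpa using hA⟩
      · exfalso
        apply ha
        obtain ⟨q, rfl⟩ : ∃ q, mm = q + 1 := ⟨mm - 1, by omega⟩
        rw [hA, List.take_succ_cons]
        simp
    · obtain ⟨c, rfl⟩ : ∃ c, k' = c + 1 := ⟨k' - 1, by omega⟩
      rw [List.drop_succ_cons] at hA
      exact ⟨c, mm, hA⟩
  · exfalso
    apply ha
    rw [hA]
    rcases Nat.eq_zero_or_pos k' with hk0 | hkpos
    · rw [hk0, List.drop_zero]
      obtain ⟨q, rfl⟩ : ∃ q, mm = q + 1 := ⟨mm - 1, by omega⟩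
      rw [List.take_succ_cons]
      simp
    · obtain ⟨c, rfl⟩ : ∃ c, k' = c + 1 := ⟨k' - 1, by omega⟩
      obtain ⟨q, hq⟩ : ∃ q, mm - ((a :: t).drop (c+1)).length = q + 1 :=
        ⟨mm - ((a :: t).drop (c+1)).length - 1, by omega⟩
      rw [hq, List.take_succ_cons, List.take_succ_cons]
      simp

lemma iv_idx {t : List ℕ} (ht : t.Nodup) {A : Finset ℕ} (h : Iv t A) :
    ∃ i j : ℕ, i + j ≤ t.length ∧ A.card = j ∧
      ∀ u, u ∈ A ↔ ∃ p, i ≤ p ∧ p < i + j ∧ t[p]? = some u := by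
  obtain ⟨i, j, hA⟩ := h
  obtain ⟨i', hi'⟩ : ∃ i', min i t.length = i' := ⟨_, rfl⟩
  obtain ⟨j', hj'⟩ : ∃ j', min j (t.length - i') = j' := ⟨_, rfl⟩
  have hi'le : i' ≤ t.length := by omega
  have hj'le : i' + j' ≤ t.length := by omega
  have hdrop : t.drop i' = t.drop i := by
    rcases le_total i t.length with hle | hle
    · rw [show i' = i by omega]
    · rw [show i' = t.length by omega, List.drop_length, List.drop_eq_nil_of_le hle]
  have htake : (t.drop i').take j' = (t.drop i').take j := by
    rw [List.take_eq_take_iff]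
    simp only [List.length_drop]
    omega
  have hA' : A = ((t.drop i').take j').toFinset := by rw [htake, hdrop]; exact hA
  have hnd : ((t.drop i').take j').Nodup :=
    ((List.take_sublist _ _).trans (List.drop_sublist _ _)).nodup ht
  have hlen : ((t.drop i').take j').length = j' := by
    rw [List.length_take, List.length_drop]; omega
  refine ⟨i', j', hj'le, ?_, ?_⟩
  · rw [hA', List.toFinset_card_of_nodup hnd, hlen]
  · intro u
    rw [hA', List.mem_toFinset, List.mem_iff_getElem?]
    constructor
    · rintro ⟨q, hq⟩
      have hqlt : q < j' := by
        obtain ⟨hlt, -⟩ := List.getElem?_eq_some_iff.mp hq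
        omega
      refine ⟨i' + q, by omega, by omega, ?_⟩
      rw [← hq, List.getElem?_take, if_pos hqlt, List.getElem?_drop]
    · rintro ⟨p, hp1, hp2, hp3⟩
      refine ⟨p - i', ?_⟩
      rw [List.getElem?_take, if_pos (by omega : p - i' < j'), List.getElem?_drop,
        show i' + (p - i') = p by omega]
      exact hp3

/-- A laminar family: any two members are nested or disjoint. -/
def Lam (F : Finset (Finset ℕ)) : Prop :=
  ∀ A ∈ F, ∀ B ∈ F, A ⊆ B ∨ B ⊆ A ∨ A ∩ B = ∅

lemma lamA_aux (N : ℕ) : ∀ (G : Finset ℕ) (F : Finset (Finset ℕ)), G.card < N →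
    Lam F → (∀ A ∈ F, A ⊆ G ∧ 2 ≤ A.card) → F.card ≤ G.card - 1 := by
  induction N with
  | zero => intro G F h; omega
  | succ N ih =>
    intro G F hGN hlam hmem
    rcases F.eq_empty_or_nonempty with rfl | hne
    · simp
    obtain ⟨M, hM, hmin⟩ := Finset.exists_min_image F Finset.card hne
    obtain ⟨hMG, hM2⟩ := hmem M hM
    obtain ⟨x, hx⟩ : M.Nonempty := Finset.card_pos.mp (by omega)
    have hDM : M.erase x ⊆ M := Finset.erase_subset _ _
    have hDG : M.erase x ⊆ G := hDM.trans hMG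
    have hDcard : (M.erase x).card = M.card - 1 := Finset.card_erase_of_mem hx
    have hc1 : ∀ A ∈ F.erase M, M ⊆ A ∨ A ∩ M = ∅ := by
      intro A hA
      obtain ⟨hAne, hAF⟩ := Finset.mem_erase.mp hA
      rcases hlam A hAF M hM with h | h | h
      · exact absurd (Finset.eq_of_subset_of_card_le h (hmin A hAF)) hAne
      · exact Or.inl h
      · exact Or.inr h
    have hsde : ∀ A : Finset ℕ, A ∩ M = ∅ → A \ M.erase x = A := by
      intro A h
      apply Finset.sdiff_eq_self_iff_disjoint.mpr
      refine Finset.disjoint_left.mpr fun u hu hue => ?_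
      have : u ∈ A ∩ M := Finset.mem_inter.mpr ⟨hu, Finset.mem_of_mem_erase hue⟩
      simp [h] at this
    have hxmem : ∀ A : Finset ℕ, M ⊆ A → x ∈ A \ M.erase x := by
      intro A h
      simp only [Finset.mem_sdiff, Finset.mem_erase]
      exact ⟨h hx, by tauto⟩
    have hMne : M.Nonempty := ⟨x, hx⟩
    have hinj : Set.InjOn (fun A => A \ M.erase x) (F.erase M) := by
      intro A hA B hB hAB
      simp only at hAB
      rcases hc1 A hA with hA' | hA' <;> rcases hc1 B hB with hB' | hB'
      · have h1 : A = A \ M.erase x ∪ M.erase x :=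
          (Finset.sdiff_union_of_subset (hDM.trans hA')).symm
        rw [h1, hAB, Finset.sdiff_union_of_subset (hDM.trans hB')]
      · exfalso
        have h1 := hxmem A hA'
        rw [hAB] at h1
        have h2 : x ∈ B := (Finset.mem_sdiff.mp h1).1
        have : x ∈ B ∩ M := Finset.mem_inter.mpr ⟨h2, hx⟩
        simp [hB'] at this
      · exfalso
        have h1 := hxmem B hB'
        rw [← hAB] at h1
        have h2 : x ∈ A := (Finset.mem_sdiff.mp h1).1
        have : x ∈ A ∩ M := Finset.mem_inter.mpr ⟨h2, hx⟩
        simp [hA'] at this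
      · rw [hsde A hA', hsde B hB'] at hAB; exact hAB
    have hG'card : (G \ M.erase x).card = G.card - (M.card - 1) := by
      rw [Finset.card_sdiff_of_subset hDG, hDcard]
    have hxG' : x ∈ G \ M.erase x := by
      simp only [Finset.mem_sdiff, Finset.mem_erase]
      exact ⟨hMG hx, by tauto⟩
    have hG'pos : 1 ≤ (G \ M.erase x).card := Finset.card_pos.mpr ⟨x, hxG'⟩
    -- the contracted family
    have hlam' : Lam ((F.erase M).image (fun A => A \ M.erase x)) := by
      intro A' hA' B' hB'
      obtain ⟨A, hA, rfl⟩ := Finset.mem_image.mp hA'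
      obtain ⟨B, hB, rfl⟩ := Finset.mem_image.mp hB'
      have hAF := (Finset.mem_erase.mp hA).2
      have hBF := (Finset.mem_erase.mp hB).2
      rcases hc1 A hA with hA1 | hA1 <;> rcases hc1 B hB with hB1 | hB1
      · rcases hlam A hAF B hBF with h | h | h
        · exact Or.inl (Finset.sdiff_subset_sdiff h (le_refl _))
        · exact Or.inr (Or.inl (Finset.sdiff_subset_sdiff h (le_refl _)))
        · exfalso
          have : x ∈ A ∩ B := Finset.mem_inter.mpr ⟨hA1 hx, hB1 hx⟩
          simp [h] at this
      · rcases hlam A hAF B hBF with h | h | h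
        · exfalso
          have : x ∈ B ∩ M := Finset.mem_inter.mpr ⟨h (hA1 hx), hx⟩
          simp [hB1] at this
        · refine Or.inr (Or.inl ?_)
          rw [hsde B hB1]
          intro u hu
          refine Finset.mem_sdiff.mpr ⟨h hu, fun hue => ?_⟩
          have : u ∈ B ∩ M := Finset.mem_inter.mpr ⟨hu, hDM hue⟩
          simp [hB1] at this
        · refine Or.inr (Or.inr ?_)
          rw [hsde B hB1]
          rw [Finset.eq_empty_iff_forall_notMem] at h ⊢
          intro u hu
          have := Finset.mem_inter.mp hu
          exact h u (Finset.mem_inter.mpr ⟨(Finset.mem_sdiff.mp this.1).1, this.2⟩)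
      · rcases hlam A hAF B hBF with h | h | h
        · refine Or.inl ?_
          rw [hsde A hA1]
          intro u hu
          refine Finset.mem_sdiff.mpr ⟨h hu, fun hue => ?_⟩
          have : u ∈ A ∩ M := Finset.mem_inter.mpr ⟨hu, hDM hue⟩
          simp [hA1] at this
        · exfalso
          have : x ∈ A ∩ M := Finset.mem_inter.mpr ⟨h (hB1 hx), hx⟩
          simp [hA1] at this
        · refine Or.inr (Or.inr ?_)
          rw [hsde A hA1]
          rw [Finset.eq_empty_iff_forall_notMem] at h ⊢
          intro u hu
          have := Finset.mem_inter.mp hu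
          exact h u (Finset.mem_inter.mpr ⟨this.1, (Finset.mem_sdiff.mp this.2).1⟩)
      · rw [hsde A hA1, hsde B hB1]
        exact hlam A hAF B hBF
    have hmem' : ∀ A' ∈ (F.erase M).image (fun A => A \ M.erase x),
        A' ⊆ G \ M.erase x ∧ 2 ≤ A'.card := by
      intro A' hA'
      obtain ⟨A, hA, rfl⟩ := Finset.mem_image.mp hA'
      have hAF := (Finset.mem_erase.mp hA).2
      obtain ⟨hAG, hA2⟩ := hmem A hAF
      refine ⟨Finset.sdiff_subset_sdiff hAG (le_refl _), ?_⟩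
      rcases hc1 A hA with h | h
      · have hne' : M ≠ A := fun he => (Finset.mem_erase.mp hA).1 he.symm
        have h1 : M.erase x ⊆ A := hDM.trans h
        have h2 : (A \ M.erase x).card = A.card - (M.card - 1) := by
          rw [Finset.card_sdiff_of_subset h1, hDcard]
        have h3 : M.card < A.card := Finset.card_lt_card (lt_of_le_of_ne h hne')
        omega
      · rw [hsde A h]; exact hA2
    have hcard_img : ((F.erase M).image (fun A => A \ M.erase x)).card = F.card - 1 := by
      rw [Finset.card_image_of_injOn hinj, Finset.card_erase_of_mem hM]
    have hihx := ih (G \ M.erase x) ((F.erase M).image (fun A => A \ M.erase x))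
      (by omega) hlam' hmem'
    have hMGle : M.card ≤ G.card := Finset.card_le_card hMG
    have hF1 : 1 ≤ F.card := Finset.card_pos.mpr hne
    omega

lemma lamA {G : Finset ℕ} {F : Finset (Finset ℕ)}
    (hlam : Lam F) (hmem : ∀ A ∈ F, A ⊆ G ∧ 2 ≤ A.card) : F.card ≤ G.card - 1 :=
  lamA_aux (G.card + 1) G F (by omega) hlam hmem

lemma lamB {G : Finset ℕ} {F : Finset (Finset ℕ)} (hne : F.Nonempty)
    (hlam : Lam F) (hmem : ∀ A ∈ F, A ⊆ G ∧ 2 ≤ A.card ∧ A.card + 1 ≤ G.card) :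
    F.card + 2 ≤ G.card := by
  classical
  obtain ⟨M, hM, hmax⟩ := Finset.exists_max_image F Finset.card hne
  obtain ⟨hMG, hM2, hMlt⟩ := hmem M hM
  have hpart : ∀ A ∈ F, ¬ A ⊆ M → A ∩ M = ∅ := by
    intro A hA hAM
    rcases hlam A hA M hM with h | h | h
    · exact absurd h hAM
    · exact absurd (Finset.eq_of_subset_of_card_le h (hmax A hA)).symm
        (fun he => hAM (he ▸ Finset.Subset.refl _))
    · exact h
  have h1 : (F.filter (fun A => A ⊆ M)).card ≤ M.card - 1 := by
    apply lamA (G := M)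
    · intro A hA B hB
      exact hlam A (Finset.mem_filter.mp hA).1 B (Finset.mem_filter.mp hB).1
    · intro A hA
      exact ⟨(Finset.mem_filter.mp hA).2, (hmem A (Finset.mem_filter.mp hA).1).2.1⟩
  have h2 : (F.filter (fun A => ¬ A ⊆ M)).card ≤ (G \ M).card - 1 := by
    apply lamA (G := G \ M)
    · intro A hA B hB
      exact hlam A (Finset.mem_filter.mp hA).1 B (Finset.mem_filter.mp hB).1
    · intro A hA
      obtain ⟨hAF, hAM⟩ := Finset.mem_filter.mp hA
      have hdisj := hpart A hAF hAM
      refine ⟨fun u hu => Finset.mem_sdiff.mpr ⟨(hmem A hAF).1 hu, fun huM => ?_⟩,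
        (hmem A hAF).2.1⟩
      have : u ∈ A ∩ M := Finset.mem_inter.mpr ⟨hu, huM⟩
      simp [hdisj] at this
  have h3 : (G \ M).card = G.card - M.card := Finset.card_sdiff_of_subset hMG
  have h4 := Finset.card_filter_add_card_filter_not (s := F) (p := fun A => A ⊆ M)
  omega

/-- `T` is the split system of an unrooted binary tree with leaf set `L`:
a collection of `2(|L|-3)` subsets of `L` (the two sides of each internal edge),
closed under complementation, with each member of size between `2` and `|L|-2`,
and pairwise compatible. -/
def IsTreeSplits (L : Finset ℕ) (T : Finset (Finset ℕ)) : Prop :=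
  (∀ A ∈ T, A ⊆ L ∧ 2 ≤ A.card ∧ A.card + 2 ≤ L.card) ∧
  (∀ A ∈ T, L \ A ∈ T) ∧
  (∀ A ∈ T, ∀ B ∈ T, A ⊆ B ∨ B ⊆ A ∨ A ∩ B = ∅ ∨ L ⊆ A ∪ B) ∧
  T.card = 2 * (L.card - 3)

/-- The tree with split system `T` is planar with respect to the cyclic ordering `l`:
every split is a contiguous arc of `l`. -/
def Planar (l : List ℕ) (T : Finset (Finset ℕ)) : Prop :=
  ∀ A ∈ T, IsArc l A

/-- `l` is a cyclic ordering of the finite set `L`. -/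
def IsOrdering (L : Finset ℕ) (l : List ℕ) : Prop :=
  l.Nodup ∧ l.toFinset = L

/-- `i` and `j` are cyclically adjacent in the ordering `l`. -/
def AdjPair (l : List ℕ) (i j : ℕ) : Prop :=
  ∃ k : ℕ, (l.rotate k).take 2 = [i, j] ∨ (l.rotate k).take 2 = [j, i]

set_option maxHeartbeats 1000000

/-- KLT orthogonality: for `α = (1, ω(2),...,ω(n-2), n-1, n)` and
`β = (1, γ(2),...,γ(m), n, γ(m+1),...,γ(n-2), n-1)` with `m = ⌈(n-3)/2⌉ + 1`,
if `{ω(2),...,ω(m)} ∩ {γ(m+1),...,γ(n-2)} ≠ ∅` then no unrooted binary tree with `n`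
leaves is planar with respect to both `α` and `β`. -/
theorem klt_orthogonality (n : ℕ) (hn : 5 ≤ n) (w g : List ℕ)
    (hw : w.Nodup ∧ w.toFinset = Finset.Icc 2 (n - 2))
    (hg : g.Nodup ∧ g.toFinset = Finset.Icc 2 (n - 2))
    (m : ℕ) (hm : m = (n - 2) / 2 + 1)
    (hint : ((w.take (m - 1)).toFinset ∩ (g.drop (m - 1)).toFinset).Nonempty)
    (α β : List ℕ)
    (hα : α = 1 :: (w ++ [n - 1, n]))
    (hβ : β = 1 :: (g.take (m - 1) ++ n :: (g.drop (m - 1) ++ [n - 1])))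
    (T : Finset (Finset ℕ)) (hT : IsTreeSplits (Finset.Icc 1 n) T) :
    ¬ (Planar α T ∧ Planar β T) := by
  classical
  rintro ⟨hPα, hPβ⟩
  obtain ⟨hwnd, hwth⟩ := hw
  obtain ⟨hgnd, hgth⟩ := hg
  obtain ⟨hTmem, hTcomp, hTpair, hTcard⟩ := hT
  -- basic lengths and arithmetic
  have lw : w.length = n - 3 := by
    have h := List.toFinset_card_of_nodup hwnd
    rw [hwth, Nat.card_Icc] at h; omega
  have lg : g.length = n - 3 := by
    have h := List.toFinset_card_of_nodup hgnd
    rw [hgth, Nat.card_Icc] at h; omega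
  have hm1 : 1 ≤ m - 1 ∧ m - 1 ≤ n - 4 ∧ 2 ≤ m := by omega
  have hLcard : (Finset.Icc 1 n).card = n := by rw [Nat.card_Icc]; omega
  have h1L : (1 : ℕ) ∈ Finset.Icc 1 n := Finset.mem_Icc.mpr ⟨le_refl _, by omega⟩
  have hnL : n ∈ Finset.Icc 1 n := Finset.mem_Icc.mpr ⟨by omega, le_refl _⟩
  have hn1L : n - 1 ∈ Finset.Icc 1 n := Finset.mem_Icc.mpr ⟨by omega, by omega⟩
  have hTsub : ∀ A ∈ T, A ⊆ Finset.Icc 1 n := fun A hA => (hTmem A hA).1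
  have hTcard2 : ∀ A ∈ T, 2 ≤ A.card := fun A hA => (hTmem A hA).2.1
  have hTcardU : ∀ A ∈ T, A.card + 2 ≤ n := fun A hA => by
    have := (hTmem A hA).2.2; omega
  have hwmem : ∀ u ∈ w, 2 ≤ u ∧ u + 2 ≤ n := by
    intro u hu
    have h : u ∈ Finset.Icc 2 (n - 2) := hwth ▸ List.mem_toFinset.mpr hu
    rw [Finset.mem_Icc] at h; omega
  have hgmem : ∀ u ∈ g, 2 ≤ u ∧ u + 2 ≤ n := by
    intro u hu
    have h : u ∈ Finset.Icc 2 (n - 2) := hgth ▸ List.mem_toFinset.mpr hu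
    rw [Finset.mem_Icc] at h; omega
  -- name the two blocks of g
  obtain ⟨Gf, hGfdef⟩ : ∃ Gf, g.take (m - 1) = Gf := ⟨_, rfl⟩
  obtain ⟨Gs, hGsdef⟩ : ∃ Gs, g.drop (m - 1) = Gs := ⟨_, rfl⟩
  rw [hGfdef] at hβ
  rw [hGsdef] at hβ hint
  obtain ⟨x, hx⟩ := hint
  rw [Finset.mem_inter] at hx
  have hxw : x ∈ w.take (m - 1) := List.mem_toFinset.mp hx.1
  have hxg : x ∈ Gs := List.mem_toFinset.mp hx.2
  have lGf : Gf.length = m - 1 := by rw [← hGfdef, List.length_take]; omega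
  have lGs : Gs.length = n - 2 - m := by rw [← hGsdef, List.length_drop]; omega
  have hgsplit : Gf ++ Gs = g := by rw [← hGfdef, ← hGsdef]; exact List.take_append_drop _ _
  have hgnd' : (Gf ++ Gs).Nodup := by rw [hgsplit]; exact hgnd
  rw [List.nodup_append] at hgnd'
  obtain ⟨hndGf, hndGs, hdisjFS⟩ := hgnd'
  have hGfmem : ∀ u ∈ Gf, 2 ≤ u ∧ u + 2 ≤ n := fun u hu =>
    hgmem u (by rw [← hgsplit]; exact List.mem_append_left _ hu)
  have hGsmem : ∀ u ∈ Gs, 2 ≤ u ∧ u + 2 ≤ n := fun u hu =>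
    hgmem u (by rw [← hgsplit]; exact List.mem_append_right _ hu)
  -- nodup of the cycles
  have hnα : α.Nodup := by
    rw [hα, List.nodup_cons]
    constructor
    · intro hmem
      rcases List.mem_append.mp hmem with h | h
      · have := hwmem 1 h; omega
      · simp at h
        rcases h with h | h <;> omega
    · rw [List.nodup_append]
      refine ⟨hwnd, by simp; omega, ?_⟩
      intro u hu v hv huv; subst huv
      have := hwmem u hu
      simp at hv
      rcases hv with h | h <;> omega
  have hnβ : β.Nodup := by
    rw [hβ, List.nodup_cons]
    constructor
    · intro hmem
      simp at hmem
      rcases hmem with h | h | h | h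
      · have := hGfmem 1 h; omega
      · omega
      · have := hGsmem 1 h; omega
      · omega
    · rw [List.nodup_append]
      refine ⟨hndGf, ?_, ?_⟩
      · rw [List.nodup_cons]
        constructor
        · intro hmem
          simp at hmem
          rcases hmem with h | h
          · have := hGsmem n h; omega
          · omega
        · rw [List.nodup_append]
          refine ⟨hndGs, by simp, ?_⟩
          intro u hu v hv huv; subst huv
          have := hGsmem u hu
          simp at hv
          omega
      · intro u hu v hv huv; subst huv
        have := hGfmem u hu
        simp at hv
        rcases hv with h | h | h
        · omega
        · exact hdisjFS _ hu _ h rfl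
        · omega
  -- the rotated cycles
  have hαrot : α.rotate (n - 1) = n :: (1 :: (w ++ [n - 1])) := by
    have h1 : α = (1 :: (w ++ [n - 1])) ++ [n] := by rw [hα]; simp
    have h2 : (1 :: (w ++ [n - 1])).length = n - 1 := by
      simp [lw]; omega
    rw [h1, List.rotate_eq_drop_append_take (by simp [lw]; omega),
      List.drop_left' h2, List.take_left' h2]
    rfl
  have hβrot : β.rotate m = n :: (Gs ++ (n - 1) :: 1 :: Gf) := by
    have h1 : β = (1 :: Gf) ++ (n :: (Gs ++ [n - 1])) := by rw [hβ]; simp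
    have h2 : ((1 : ℕ) :: Gf).length = m := by simp [lGf]; omega
    rw [h1, List.rotate_eq_drop_append_take (by simp [lGf]; omega),
      List.drop_left' h2, List.take_left' h2]
    simp
  have hTαnd : (1 :: (w ++ [n - 1])).Nodup := by
    have h := (List.nodup_rotate (n := n - 1)).mpr hnα
    rw [hαrot] at h
    exact (List.nodup_cons.mp h).2
  have hTβnd : (Gs ++ (n - 1) :: 1 :: Gf).Nodup := by
    have h := (List.nodup_rotate (n := m)).mpr hnβ
    rw [hβrot] at h
    exact (List.nodup_cons.mp h).2
  have lTα : (1 :: (w ++ [n - 1])).length = n - 1 := by simp [lw]; omega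
  have lTβ : (Gs ++ (n - 1) :: 1 :: Gf).length = n - 1 := by simp [lGs, lGf]; omega
  -- position table
  have hTα0 : (1 :: (w ++ [n - 1]))[0]? = some 1 := by simp
  have hTαlast : (1 :: (w ++ [n - 1]))[n - 2]? = some (n - 1) := by
    rw [show n - 2 = (n - 3) + 1 by omega, List.getElem?_cons_succ,
      List.getElem?_append_right (by omega), lw]
    simp
  have hTαw : ∀ u ∈ w.take (m - 1), ∃ q, q < m - 1 ∧ (1 :: (w ++ [n - 1]))[q + 1]? = some u := by
    intro u hu
    obtain ⟨q, hqlt, hq⟩ := List.mem_iff_getElem.mp hu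
    rw [List.getElem_take] at hq
    rw [List.length_take, lw] at hqlt
    have hql : q < m - 1 := by omega
    have hqw : q < w.length := by omega
    refine ⟨q, hql, ?_⟩
    rw [List.getElem?_cons_succ, List.getElem?_append_left hqw,
      List.getElem?_eq_getElem hqw, hq]
  have hTβn1 : (Gs ++ (n - 1) :: 1 :: Gf)[Gs.length]? = some (n - 1) := by
    rw [List.getElem?_append_right (le_refl _)]
    simp
  have hTβ1 : (Gs ++ (n - 1) :: 1 :: Gf)[Gs.length + 1]? = some 1 := by
    rw [List.getElem?_append_right (by omega)]
    simp
  have hTβf : ∀ u ∈ Gf, ∃ q, q < m - 1 ∧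
      (Gs ++ (n - 1) :: 1 :: Gf)[Gs.length + 2 + q]? = some u := by
    intro u hu
    obtain ⟨q, hqlt, hq⟩ := List.mem_iff_getElem.mp hu
    refine ⟨q, by omega, ?_⟩
    rw [List.getElem?_append_right (by omega),
      show Gs.length + 2 + q - Gs.length = q + 2 by omega,
      List.getElem?_cons_succ, List.getElem?_cons_succ,
      List.getElem?_eq_getElem hqlt, hq]
  have hTβs : ∀ u ∈ Gs, ∃ q, q < Gs.length ∧ (Gs ++ (n - 1) :: 1 :: Gf)[q]? = some u := by
    intro u hu
    obtain ⟨q, hqlt, hq⟩ := List.mem_iff_getElem.mp hu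
    refine ⟨q, hqlt, ?_⟩
    rw [List.getElem?_append_left hqlt, List.getElem?_eq_getElem hqlt, hq]
  -- arc-to-interval converters
  have hivα : ∀ A ∈ T, n ∉ A → Iv (1 :: (w ++ [n - 1])) A := by
    intro A hA hnA
    have h := isArc_rotate α A (n - 1) (hPα A hA)
    rw [hαrot] at h
    exact isArc_cons_iv h hnA
  have hivβ : ∀ A ∈ T, n ∉ A → Iv (Gs ++ (n - 1) :: 1 :: Gf) A := by
    intro A hA hnA
    have h := isArc_rotate β A m (hPβ A hA)
    rw [hβrot] at h
    exact isArc_cons_iv h hnA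
  -- P1
  have P1 : ∀ A ∈ T, n ∈ A → 1 ∈ A ∨ n - 1 ∈ A := by
    intro A hA hnA
    by_contra hcon
    push_neg at hcon
    obtain ⟨h1, hn1⟩ := hcon
    have hAc : Finset.Icc 1 n \ A ∈ T := hTcomp A hA
    have hnAc : n ∉ Finset.Icc 1 n \ A := fun h => (Finset.mem_sdiff.mp h).2 hnA
    obtain ⟨i, j, hij, hcard, hch⟩ := iv_idx hTαnd (hivα _ hAc hnAc)
    obtain ⟨p0, hp0a, hp0b, hp0c⟩ := (hch 1).mp (Finset.mem_sdiff.mpr ⟨h1L, h1⟩)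
    have hp0lt : p0 < (1 :: (w ++ [n - 1])).length := (List.getElem?_eq_some_iff.mp hp0c).1
    have hp00 : p0 = 0 := (List.getElem?_inj hp0lt hTαnd).mp (hp0c.trans hTα0.symm)
    obtain ⟨p1, hp1a, hp1b, hp1c⟩ := (hch (n - 1)).mp (Finset.mem_sdiff.mpr ⟨hn1L, hn1⟩)
    have hp1lt : p1 < (1 :: (w ++ [n - 1])).length := (List.getElem?_eq_some_iff.mp hp1c).1
    have hp1e : p1 = n - 2 := (List.getElem?_inj hp1lt hTαnd).mp (hp1c.trans hTαlast.symm)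
    rw [lTα] at hij
    have hcards : (Finset.Icc 1 n \ A).card = n - A.card := by
      rw [Finset.card_sdiff_of_subset (hTsub A hA), hLcard]
    have h2A := hTcard2 A hA
    omega
  -- P2
  have P2 : ∀ A ∈ T, n ∈ A → n - 1 ∉ A → 1 ∈ A ∧ ∀ u ∈ Gf, u ∈ A := by
    intro A hA hnA hn1A
    have h1A : 1 ∈ A := (P1 A hA hnA).resolve_right hn1A
    refine ⟨h1A, fun u hu => ?_⟩
    by_contra huA
    have hAc : Finset.Icc 1 n \ A ∈ T := hTcomp A hA
    have hnAc : n ∉ Finset.Icc 1 n \ A := fun h => (Finset.mem_sdiff.mp h).2 hnA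
    obtain ⟨i, j, hij, hcard, hch⟩ := iv_idx hTβnd (hivβ _ hAc hnAc)
    obtain ⟨p1, hp1a, hp1b, hp1c⟩ := (hch (n - 1)).mp (Finset.mem_sdiff.mpr ⟨hn1L, hn1A⟩)
    have hp1lt : p1 < (Gs ++ (n - 1) :: 1 :: Gf).length := (List.getElem?_eq_some_iff.mp hp1c).1
    have hp1e : p1 = Gs.length := (List.getElem?_inj hp1lt hTβnd).mp (hp1c.trans hTβn1.symm)
    have huI := hGfmem u hu
    have huL : u ∈ Finset.Icc 1 n := Finset.mem_Icc.mpr ⟨by omega, by omega⟩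
    obtain ⟨q, hqlt, hq⟩ := hTβf u hu
    obtain ⟨p2, hp2a, hp2b, hp2c⟩ := (hch u).mp (Finset.mem_sdiff.mpr ⟨huL, huA⟩)
    have hp2lt : p2 < (Gs ++ (n - 1) :: 1 :: Gf).length := (List.getElem?_eq_some_iff.mp hp2c).1
    have hp2e : p2 = Gs.length + 2 + q := (List.getElem?_inj hp2lt hTβnd).mp (hp2c.trans hq.symm)
    have h1in : (1 : ℕ) ∈ Finset.Icc 1 n \ A :=
      (hch 1).mpr ⟨Gs.length + 1, by omega, by omega, hTβ1⟩
    exact (Finset.mem_sdiff.mp h1in).2 h1A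
  -- P3
  have P3 : ∀ A ∈ T, 1 ∈ A → n ∉ A → n - 1 ∉ A → ∀ u ∈ A, u = 1 ∨ u ∈ Gf := by
    intro A hA h1A hnA hn1A u hu
    by_contra hcon
    push_neg at hcon
    obtain ⟨hu1, huf⟩ := hcon
    have huL := hTsub A hA hu
    rw [Finset.mem_Icc] at huL
    have hun : u ≠ n := fun he => hnA (he ▸ hu)
    have hun1 : u ≠ n - 1 := fun he => hn1A (he ▸ hu)
    have hug : u ∈ g := by
      rw [← List.mem_toFinset, hgth, Finset.mem_Icc]
      omega
    have hugs : u ∈ Gs := by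
      rw [← hgsplit] at hug
      rcases List.mem_append.mp hug with h | h
      · exact absurd h huf
      · exact h
    obtain ⟨i, j, hij, hcard, hch⟩ := iv_idx hTβnd (hivβ A hA hnA)
    obtain ⟨q, hqlt, hq⟩ := hTβs u hugs
    obtain ⟨p2, hp2a, hp2b, hp2c⟩ := (hch u).mp hu
    have hp2lt : p2 < (Gs ++ (n - 1) :: 1 :: Gf).length := (List.getElem?_eq_some_iff.mp hp2c).1
    have hp2e : p2 = q := (List.getElem?_inj hp2lt hTβnd).mp (hp2c.trans hq.symm)
    obtain ⟨p1, hp1a, hp1b, hp1c⟩ := (hch 1).mp h1A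
    have hp1lt : p1 < (Gs ++ (n - 1) :: 1 :: Gf).length := (List.getElem?_eq_some_iff.mp hp1c).1
    have hp1e : p1 = Gs.length + 1 := (List.getElem?_inj hp1lt hTβnd).mp (hp1c.trans hTβ1.symm)
    have hn1in : n - 1 ∈ A := (hch (n - 1)).mpr ⟨Gs.length, by omega, by omega, hTβn1⟩
    exact hn1A hn1in
  -- P5
  have P5 : insert 1 Gf.toFinset ∉ T := by
    intro hS
    have h1f : (1 : ℕ) ∉ Gf.toFinset := fun h => by
      have := hGfmem 1 (List.mem_toFinset.mp h); omega
    have hScard : (insert 1 Gf.toFinset).card = m - 1 + 1 := by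
      rw [Finset.card_insert_of_notMem h1f, List.toFinset_card_of_nodup hndGf, lGf]
    have hnS : n ∉ insert 1 Gf.toFinset := by
      intro h
      rcases Finset.mem_insert.mp h with h | h
      · omega
      · have := hGfmem n (List.mem_toFinset.mp h); omega
    have hn1S : n - 1 ∉ insert 1 Gf.toFinset := by
      intro h
      rcases Finset.mem_insert.mp h with h | h
      · omega
      · have := hGfmem (n - 1) (List.mem_toFinset.mp h); omega
    obtain ⟨i, j, hij, hcard, hch⟩ := iv_idx hTαnd (hivα _ hS hnS)
    obtain ⟨p0, hp0a, hp0b, hp0c⟩ := (hch 1).mp (Finset.mem_insert_self 1 _)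
    have hp0lt : p0 < (1 :: (w ++ [n - 1])).length := (List.getElem?_eq_some_iff.mp hp0c).1
    have hp00 : p0 = 0 := (List.getElem?_inj hp0lt hTαnd).mp (hp0c.trans hTα0.symm)
    rw [hScard] at hcard
    obtain ⟨q, hqlt, hq⟩ := hTαw x hxw
    have hxS : x ∈ insert 1 Gf.toFinset :=
      (hch x).mpr ⟨q + 1, by omega, by omega, hq⟩
    rcases Finset.mem_insert.mp hxS with h | h
    · have := hGsmem x hxg; omega
    · exact hdisjFS _ (by rw [← hgsplit] at *; exact List.mem_toFinset.mp h) _ hxg rfl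
  -- nonemptiness and minimal split containing n
  have hTc2 : T.card = 2 * (n - 3) := by rw [hTcard, hLcard]
  have hTne : T.Nonempty := Finset.card_pos.mp (by omega)
  obtain ⟨A₀, hA₀⟩ := hTne
  have hPne : (T.filter (fun A => n ∈ A)).Nonempty := by
    by_cases h : n ∈ A₀
    · exact ⟨A₀, Finset.mem_filter.mpr ⟨hA₀, h⟩⟩
    · exact ⟨Finset.Icc 1 n \ A₀, Finset.mem_filter.mpr ⟨hTcomp _ hA₀,
        Finset.mem_sdiff.mpr ⟨hnL, h⟩⟩⟩
  obtain ⟨C, hCf, hCmin⟩ := Finset.exists_min_image _ Finset.card hPne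
  obtain ⟨hC, hnC⟩ := Finset.mem_filter.mp hCf
  have hK : ∀ B ∈ T, n ∈ B → C ⊆ B ∨ Finset.Icc 1 n \ C ⊆ B := by
    intro B hB hnB
    rcases hTpair C hC B hB with h | h | h | h
    · exact Or.inl h
    · have hCB : B = C := Finset.eq_of_subset_of_card_le h
        (hCmin B (Finset.mem_filter.mpr ⟨hB, hnB⟩))
      exact Or.inl (by rw [← hCB])
    · exfalso
      have : n ∈ C ∩ B := Finset.mem_inter.mpr ⟨hnC, hnB⟩
      simp [h] at this
    · refine Or.inr fun u hu => ?_
      obtain ⟨huL, huC⟩ := Finset.mem_sdiff.mp hu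
      rcases Finset.mem_union.mp (h huL) with h' | h'
      · exact absurd h' huC
      · exact h'
  -- the split-child lemma (via laminar bound)
  have child : 3 ≤ C.card → C.erase n ∈ T := by
    intro h3
    by_contra hCx
    have hCxL : C.erase n ⊆ Finset.Icc 1 n := (Finset.erase_subset _ _).trans (hTsub C hC)
    have hCxcard : (C.erase n).card = C.card - 1 := Finset.card_erase_of_mem hnC
    have hbij : (T.filter (fun A => n ∈ A)).card = (T.filter (fun A => ¬ n ∈ A)).card := by
      apply Finset.card_bij (fun A _ => Finset.Icc 1 n \ A)
      · intro A hA
        obtain ⟨hAT, hAn⟩ := Finset.mem_filter.mp hA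
        exact Finset.mem_filter.mpr ⟨hTcomp A hAT, fun h => (Finset.mem_sdiff.mp h).2 hAn⟩
      · intro A hA B hB h
        have h1 := Finset.sdiff_sdiff_eq_self (hTsub A (Finset.mem_filter.mp hA).1)
        have h2 := Finset.sdiff_sdiff_eq_self (hTsub B (Finset.mem_filter.mp hB).1)
        rw [← h1, h, h2]
      · intro B hB
        obtain ⟨hBT, hBn⟩ := Finset.mem_filter.mp hB
        refine ⟨Finset.Icc 1 n \ B, Finset.mem_filter.mpr ⟨hTcomp B hBT,
          Finset.mem_sdiff.mpr ⟨hnL, hBn⟩⟩, Finset.sdiff_sdiff_eq_self (hTsub B hBT)⟩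
    have hsplitc := Finset.card_filter_add_card_filter_not
      (s := T) (p := fun A => n ∈ A)
    have hT2card : (T.filter (fun A => ¬ n ∈ A)).card = n - 3 := by omega
    have hCxT2 : C.erase n ∉ T.filter (fun A => ¬ n ∈ A) :=
      fun h => hCx (Finset.mem_filter.mp h).1
    have hFcard : (insert (C.erase n) (T.filter (fun A => ¬ n ∈ A))).card = n - 2 := by
      rw [Finset.card_insert_of_notMem hCxT2, hT2card]; omega
    have hmirror : ∀ B ∈ T, ¬ n ∈ B →
        (C.erase n ⊆ B ∨ B ⊆ C.erase n ∨ C.erase n ∩ B = ∅) := by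
      intro B hBT hBn
      rcases hK (Finset.Icc 1 n \ B) (hTcomp B hBT)
          (Finset.mem_sdiff.mpr ⟨hnL, hBn⟩) with h | h
      · refine Or.inr (Or.inr ?_)
        rw [Finset.eq_empty_iff_forall_notMem]
        intro u hu
        obtain ⟨hu1, hu2⟩ := Finset.mem_inter.mp hu
        exact (Finset.mem_sdiff.mp (h (Finset.mem_of_mem_erase hu1))).2 hu2
      · refine Or.inr (Or.inl fun u hu => ?_)
        have huL : u ∈ Finset.Icc 1 n := hTsub B hBT hu
        have huC : u ∈ C := by
          by_contra hc
          exact (Finset.mem_sdiff.mp (h (Finset.mem_sdiff.mpr ⟨huL, hc⟩))).2 hu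
        exact Finset.mem_erase.mpr ⟨fun he => hBn (he ▸ hu), huC⟩
    have hFlam : Lam (insert (C.erase n) (T.filter (fun A => ¬ n ∈ A))) := by
      intro A hA B hB
      rcases Finset.mem_insert.mp hA with rfl | hA' <;>
        rcases Finset.mem_insert.mp hB with hBe | hB'
      · rw [hBe]
        exact Or.inl (Finset.Subset.refl _)
      · obtain ⟨hBT, hBn⟩ := Finset.mem_filter.mp hB'
        exact hmirror B hBT hBn
      · obtain ⟨hAT, hAn⟩ := Finset.mem_filter.mp hA'
        rw [hBe]
        rcases hmirror A hAT hAn with h | h | h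
        · exact Or.inr (Or.inl h)
        · exact Or.inl h
        · exact Or.inr (Or.inr (by rwa [Finset.inter_comm] at h))
      · obtain ⟨hAT, hAn⟩ := Finset.mem_filter.mp hA'
        obtain ⟨hBT, hBn⟩ := Finset.mem_filter.mp hB'
        rcases hTpair A hAT B hBT with h | h | h | h
        · exact Or.inl h
        · exact Or.inr (Or.inl h)
        · exact Or.inr (Or.inr h)
        · exfalso
          rcases Finset.mem_union.mp (h hnL) with h' | h'
          · exact hAn h'
          · exact hBn h'
    have hGc : ((Finset.Icc 1 n).erase n).card = n - 1 := by
      rw [Finset.card_erase_of_mem hnL, hLcard]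
    have hFmem : ∀ A ∈ insert (C.erase n) (T.filter (fun A => ¬ n ∈ A)),
        A ⊆ (Finset.Icc 1 n).erase n ∧ 2 ≤ A.card ∧
          A.card + 1 ≤ ((Finset.Icc 1 n).erase n).card := by
      intro A hA
      rcases Finset.mem_insert.mp hA with rfl | hA'
      · refine ⟨fun u hu => Finset.mem_erase.mpr ⟨(Finset.mem_erase.mp hu).1,
          hTsub C hC (Finset.mem_of_mem_erase hu)⟩, ?_, ?_⟩
        · rw [hCxcard]; omega
        · rw [hCxcard, hGc]
          have := hTcardU C hC
          omega
      · obtain ⟨hAT, hAn⟩ := Finset.mem_filter.mp hA'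
        refine ⟨fun u hu => Finset.mem_erase.mpr ⟨fun he => hAn (he ▸ hu),
          hTsub A hAT hu⟩, hTcard2 A hAT, ?_⟩
        rw [hGc]
        have := hTcardU A hAT
        omega
    have := lamB ⟨C.erase n, Finset.mem_insert_self _ _⟩ hFlam hFmem
    rw [hFcard, hGc] at this
    omega
  have hc2 := hTcard2 C hC
  by_cases h2 : C.card = 2
  -- case |C| = 2
  · obtain ⟨y, hy⟩ := Finset.card_eq_one.mp
      (by rw [Finset.card_erase_of_mem hnC, h2] : (C.erase n).card = 1)
    have hy' : y ∈ C.erase n := by rw [hy]; exact Finset.mem_singleton_self y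
    have hyn : y ≠ n := (Finset.mem_erase.mp hy').1
    have hyC : y ∈ C := Finset.mem_of_mem_erase hy'
    have hCmem : ∀ u ∈ C, u = n ∨ u = y := by
      intro u hu
      by_cases hun : u = n
      · exact Or.inl hun
      · refine Or.inr ?_
        have : u ∈ C.erase n := Finset.mem_erase.mpr ⟨hun, hu⟩
        rw [hy] at this
        exact Finset.mem_singleton.mp this
    have hy1 : y = 1 ∨ y = n - 1 := by
      rcases P1 C hC hnC with h | h
      · rcases hCmem 1 h with h' | h'
        · omega
        · exact Or.inl h'.symm
      · rcases hCmem (n - 1) h with h' | h'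
        · omega
        · exact Or.inr h'.symm
    have hDc : Finset.Icc 1 n \ C ∈ T := hTcomp C hC
    have hnD : n ∉ Finset.Icc 1 n \ C := fun h => (Finset.mem_sdiff.mp h).2 hnC
    obtain ⟨i, j, hij, hcard, hch⟩ := iv_idx hTβnd (hivβ _ hDc hnD)
    have hxI := hGsmem x hxg
    have hxD : x ∈ Finset.Icc 1 n \ C := by
      refine Finset.mem_sdiff.mpr ⟨Finset.mem_Icc.mpr ⟨by omega, by omega⟩, fun hxC => ?_⟩
      rcases hCmem x hxC with h' | h' <;> rcases hy1 with h'' | h'' <;> omega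
    have hGfne : Gf ≠ [] := by
      intro h
      rw [h] at lGf
      simp at lGf
      omega
    obtain ⟨u₀, hu₀⟩ := List.exists_mem_of_ne_nil Gf hGfne
    have hu₀I := hGfmem u₀ hu₀
    have hu₀D : u₀ ∈ Finset.Icc 1 n \ C := by
      refine Finset.mem_sdiff.mpr ⟨Finset.mem_Icc.mpr ⟨by omega, by omega⟩, fun hC' => ?_⟩
      rcases hCmem u₀ hC' with h' | h' <;> rcases hy1 with h'' | h'' <;> omega
    obtain ⟨qx, hqxlt, hqx⟩ := hTβs x hxg
    obtain ⟨px, hpxa, hpxb, hpxc⟩ := (hch x).mp hxD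
    have hpxlt : px < (Gs ++ (n - 1) :: 1 :: Gf).length := (List.getElem?_eq_some_iff.mp hpxc).1
    have hpxe : px = qx := (List.getElem?_inj hpxlt hTβnd).mp (hpxc.trans hqx.symm)
    obtain ⟨qf, hqflt, hqf⟩ := hTβf u₀ hu₀
    obtain ⟨pf, hpfa, hpfb, hpfc⟩ := (hch u₀).mp hu₀D
    have hpflt : pf < (Gs ++ (n - 1) :: 1 :: Gf).length := (List.getElem?_eq_some_iff.mp hpfc).1
    have hpfe : pf = Gs.length + 2 + qf := (List.getElem?_inj hpflt hTβnd).mp (hpfc.trans hqf.symm)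
    have hyD : y ∈ Finset.Icc 1 n \ C := by
      rcases hy1 with rfl | rfl
      · exact (hch 1).mpr ⟨Gs.length + 1, by omega, by omega, hTβ1⟩
      · exact (hch (n - 1)).mpr ⟨Gs.length, by omega, by omega, hTβn1⟩
    exact (Finset.mem_sdiff.mp hyD).2 hyC
  -- case |C| ≥ 3
  · have h3 : 3 ≤ C.card := by omega
    have hCxT : C.erase n ∈ T := child h3
    by_cases hn1C : n - 1 ∈ C
    · by_cases h1C : 1 ∈ C
      · -- both 1 and n-1 in C : contradiction with P1 on complement of C.erase n
        have hD : Finset.Icc 1 n \ C.erase n ∈ T := hTcomp _ hCxT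
        have hnD : n ∈ Finset.Icc 1 n \ C.erase n :=
          Finset.mem_sdiff.mpr ⟨hnL, Finset.notMem_erase _ _⟩
        rcases P1 _ hD hnD with h | h
        · exact (Finset.mem_sdiff.mp h).2 (Finset.mem_erase.mpr ⟨by omega, h1C⟩)
        · exact (Finset.mem_sdiff.mp h).2 (Finset.mem_erase.mpr ⟨by omega, hn1C⟩)
      · -- n-1 ∈ C, 1 ∉ C
        have hD : Finset.Icc 1 n \ C.erase n ∈ T := hTcomp _ hCxT
        have hnD : n ∈ Finset.Icc 1 n \ C.erase n :=
          Finset.mem_sdiff.mpr ⟨hnL, Finset.notMem_erase _ _⟩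
        have hn1D : n - 1 ∉ Finset.Icc 1 n \ C.erase n :=
          fun h => (Finset.mem_sdiff.mp h).2 (Finset.mem_erase.mpr ⟨by omega, hn1C⟩)
        obtain ⟨h1D, hGfD⟩ := P2 _ hD hnD hn1D
        have hE : Finset.Icc 1 n \ C ∈ T := hTcomp C hC
        have h1E : 1 ∈ Finset.Icc 1 n \ C := Finset.mem_sdiff.mpr ⟨h1L, h1C⟩
        have hnE : n ∉ Finset.Icc 1 n \ C := fun h => (Finset.mem_sdiff.mp h).2 hnC
        have hn1E : n - 1 ∉ Finset.Icc 1 n \ C := fun h => (Finset.mem_sdiff.mp h).2 hn1C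
        have hES : Finset.Icc 1 n \ C = insert 1 Gf.toFinset := by
          apply Finset.Subset.antisymm
          · intro u hu
            rcases P3 _ hE h1E hnE hn1E u hu with h | h
            · rw [h]; exact Finset.mem_insert_self _ _
            · exact Finset.mem_insert.mpr (Or.inr (List.mem_toFinset.mpr h))
          · intro u hu
            have huD : u ∈ Finset.Icc 1 n \ C.erase n := by
              rcases Finset.mem_insert.mp hu with rfl | h
              · exact Finset.mem_sdiff.mpr
                  ⟨h1L, fun hh => h1C (Finset.mem_of_mem_erase hh)⟩
              · exact hGfD u (List.mem_toFinset.mp h)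
            obtain ⟨huL, huCx⟩ := Finset.mem_sdiff.mp huD
            have hun : u ≠ n := by
              rcases Finset.mem_insert.mp hu with rfl | h
              · omega
              · have := hGfmem u (List.mem_toFinset.mp h); omega
            exact Finset.mem_sdiff.mpr
              ⟨huL, fun huC => huCx (Finset.mem_erase.mpr ⟨hun, huC⟩)⟩
        exact P5 (hES ▸ hE)
    · -- n-1 ∉ C
      obtain ⟨h1C, hGfC⟩ := P2 C hC hnC hn1C
      have h1Cx : 1 ∈ C.erase n := Finset.mem_erase.mpr ⟨by omega, h1C⟩
      have hnCx : n ∉ C.erase n := Finset.notMem_erase _ _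
      have hn1Cx : n - 1 ∉ C.erase n := fun h => hn1C (Finset.mem_of_mem_erase h)
      have hCxS : C.erase n = insert 1 Gf.toFinset := by
        apply Finset.Subset.antisymm
        · intro u hu
          rcases P3 _ hCxT h1Cx hnCx hn1Cx u hu with h | h
          · rw [h]; exact Finset.mem_insert_self _ _
          · exact Finset.mem_insert.mpr (Or.inr (List.mem_toFinset.mpr h))
        · intro u hu
          rcases Finset.mem_insert.mp hu with rfl | h
          · exact h1Cx
          · have huGf := List.mem_toFinset.mp h
            have := hGfmem u huGf
            exact Finset.mem_erase.mpr ⟨by omega, hGfC u huGf⟩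
      exact P5 (hCxS ▸ hCxT)
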